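/- arXiv:2410.08802 — 5 statements merged into one kernel-verified Lean document; each statement's English description precedes it below -/
import Mathlib

section
/- For all nonnegative integers c, k and all m, the identity q_k^{(c)}(m) = ∑_{i=0}^{k} binom(2c+1, i) * p_{k-i}^{(c)}(m) holds, where p and q are the polynomials defined by p_j^{(c)}(m) = binom(m-c-1, j) * binom(m+c+j, j) and q_j^{(c)}(m) = binom(m+c, j) * binom(m-c-1+j, j). -/
/-- Binomial coefficient with arbitrary (rational) upper argument:
`binom(x,k) = x(x-1)...(x-k+1)/k!`. -/
noncomputable def qbinom (x : ℚ) (k : ℕ) : ℚ :=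
  (∏ i ∈ Finset.range k, (x - i)) / (Nat.factorial k)

/-- `p_j^{(c)}(m) = binom(m-c-1, j) * binom(m+c+j, j)`. -/
noncomputable def pP (c j : ℕ) (m : ℚ) : ℚ :=
  qbinom (m - c - 1) j * qbinom (m + c + j) j

/-- `q_j^{(c)}(m) = binom(m+c, j) * binom(m-c-1+j, j)`. -/
noncomputable def qP (c j : ℕ) (m : ℚ) : ℚ :=
  qbinom (m + c) j * qbinom (m - c - 1 + j) j

lemma qbinom_zero (x : ℚ) : qbinom x 0 = 1 := by simp [qbinom]

lemma qbinom_pascal (x : ℚ) (k : ℕ) :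
    qbinom (x + 1) (k + 1) = qbinom x (k + 1) + qbinom x k := by
  have hP : ∏ i ∈ Finset.range (k+1), (x + 1 - i)
      = (∏ i ∈ Finset.range k, (x - i)) * (x + 1) := by
    rw [Finset.prod_range_succ' (fun i => x + 1 - (i : ℕ)) k]
    push_cast
    congr 1
    · exact Finset.prod_congr rfl (fun i _ => by push_cast; ring)
    · ring
  have hQ : ∏ i ∈ Finset.range (k+1), (x - i)
      = (∏ i ∈ Finset.range k, (x - i)) * (x - k) := Finset.prod_range_succ _ _
  have hf : ((k+1).factorial : ℚ) = (k+1) * k.factorial := by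
    rw [Nat.factorial_succ]; push_cast; ring
  have h0 : (k.factorial : ℚ) ≠ 0 := Nat.cast_ne_zero.mpr k.factorial_ne_zero
  have h1 : ((k:ℚ)+1) ≠ 0 := by positivity
  unfold qbinom
  rw [hP, hQ, hf]
  field_simp
  ring

lemma qbinom_vand (n : ℕ) (a : ℚ) (k : ℕ) :
    qbinom (a + n) k = ∑ i ∈ Finset.range (k + 1), (n.choose i : ℚ) * qbinom a (k - i) := by
  induction n generalizing a with
  | zero =>
    rw [Finset.sum_eq_single 0]
    · simp
    · intro i _ hi
      rw [Nat.choose_eq_zero_of_lt (Nat.pos_of_ne_zero hi)]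
      simp
    · simp
  | succ n ih =>
    have h1 : a + ((n : ℚ) + 1) = (a + 1) + n := by ring
    push_cast
    rw [h1, ih (a + 1)]
    -- peel the last term on the left
    rw [Finset.sum_range_succ]
    have hstep : ∀ i ∈ Finset.range k, (n.choose i : ℚ) * qbinom (a + 1) (k - i)
        = (n.choose i : ℚ) * qbinom a (k - i) + (n.choose i : ℚ) * qbinom a (k - 1 - i) := by
      intro i hi
      have hik : i < k := Finset.mem_range.mp hi
      have hk : k - i = (k - 1 - i) + 1 := by omega
      rw [hk, qbinom_pascal, mul_add]
    rw [Finset.sum_congr rfl hstep, Finset.sum_add_distrib, Nat.sub_self]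
    have hA : (∑ i ∈ Finset.range k, (n.choose i : ℚ) * qbinom a (k - i))
        + (n.choose k : ℚ) * qbinom (a + 1) 0
        = ∑ i ∈ Finset.range (k + 1), (n.choose i : ℚ) * qbinom a (k - i) := by
      rw [Finset.sum_range_succ, qbinom_zero]
      simp [qbinom_zero]
    have hB : ∑ i ∈ Finset.range k, (n.choose i : ℚ) * qbinom a (k - 1 - i)
        = ∑ i ∈ Finset.range (k + 1), (n.choose (i - 1) : ℚ) * qbinom a (k - i)
          - (n.choose 0 : ℚ) * qbinom a k := by
      rw [Finset.sum_range_succ' (fun i => ((n.choose (i - 1) : ℚ)) * qbinom a (k - i)) k]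
      simp only [Nat.add_sub_cancel, Nat.choose_zero_right, Nat.sub_zero, Nat.cast_one]
      have : ∀ i ∈ Finset.range k, (n.choose i : ℚ) * qbinom a (k - 1 - i)
          = (n.choose i : ℚ) * qbinom a (k - (i + 1)) := by
        intro i hi; congr 2; omega
      rw [Finset.sum_congr rfl this]
      simp only [Nat.zero_sub, Nat.choose_zero_right, Nat.cast_one, one_mul]
      ring
    rw [add_right_comm, hA, hB, add_sub, ← Finset.sum_add_distrib]
    have key : ∀ i ∈ Finset.range (k + 1),
        (n.choose i : ℚ) * qbinom a (k - i) + (n.choose (i - 1) : ℚ) * qbinom a (k - i)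
        = ((n+1).choose i : ℚ) * qbinom a (k - i)
          + (if i = 0 then qbinom a k else 0) := by
      intro i _
      rcases i with _ | j
      · simp
      · rw [← add_mul]
        have : (n.choose (j+1) : ℚ) + (n.choose (j+1-1) : ℚ) = ((n+1).choose (j+1) : ℚ) := by
          rw [Nat.choose_succ_succ']
          push_cast
          simp [add_comm]
        simp only [this, if_neg (Nat.succ_ne_zero j), add_zero]
    rw [Finset.sum_congr rfl key, Finset.sum_add_distrib,
      Finset.sum_ite_eq' (Finset.range (k+1)) 0 (fun _ => qbinom a k)]
    simp

lemma qbinom_swap (a : ℚ) (k j : ℕ) (hjk : j ≤ k) :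
    qbinom a (k - j) * qbinom (a + k) k = qbinom (a + j) k * qbinom (a + k) (k - j) := by
  unfold qbinom
  rw [div_mul_div_comm, div_mul_div_comm, mul_comm ((k-j).factorial : ℚ),
    mul_comm ((k:ℕ).factorial : ℚ)]
  congr 1
  have h1 : (∏ i ∈ Finset.range (k + (k - j)), (a + k - i))
      = (∏ i ∈ Finset.range k, (a + k - i)) * ∏ i ∈ Finset.range (k - j), (a - i) := by
    rw [Finset.prod_range_add]
    congr 1
    refine Finset.prod_congr rfl fun i _ => ?_
    push_cast
    ring
  have h2 : (∏ i ∈ Finset.range ((k - j) + k), (a + k - i))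
      = (∏ i ∈ Finset.range (k - j), (a + k - i)) * ∏ i ∈ Finset.range k, (a + j - i) := by
    rw [Finset.prod_range_add]
    congr 1
    refine Finset.prod_congr rfl fun i _ => ?_
    have : ((k - j + i : ℕ) : ℚ) = (k : ℚ) - j + i := by
      push_cast [Nat.cast_sub hjk]
      ring
    rw [this]
    ring
  calc (∏ i ∈ Finset.range (k - j), (a - i)) * ∏ i ∈ Finset.range k, (a + k - i)
      = ∏ i ∈ Finset.range (k + (k - j)), (a + k - i) := by rw [h1]; ring
    _ = ∏ i ∈ Finset.range ((k - j) + k), (a + k - i) := by rw [Nat.add_comm]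
    _ = (∏ i ∈ Finset.range k, (a + j - i)) * ∏ i ∈ Finset.range (k - j), (a + k - i) := by
        rw [h2]; ring

theorem stmt2 (c k : ℕ) (m : ℚ) :
    qP c k m = ∑ i ∈ Finset.range (k + 1),
      (Nat.choose (2 * c + 1) i : ℚ) * pP c (k - i) m := by
  set n : ℕ := 2 * c + 1 with hn
  set a : ℚ := m - c - 1 with ha
  have han : a + (n : ℚ) = m + c := by rw [ha, hn]; push_cast; ring
  -- define the common double-sum term
  set g : ℕ → ℕ → ℚ := fun i j =>
    (n.choose j : ℚ) * (j.choose i : ℚ) * (qbinom a (k - i) * qbinom (a + k) (k - j)) with hg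
  -- LHS
  have hL : qP c k m = ∑ j ∈ Finset.range (k + 1), ∑ i ∈ Finset.range (j + 1), g i j := by
    have e1 : qP c k m = qbinom (a + n) k * qbinom (a + k) k := by
      rw [qP, han, ha]
    rw [e1, qbinom_vand n a k, Finset.sum_mul]
    refine Finset.sum_congr rfl fun j hj => ?_
    have hjk : j ≤ k := by
      have := Finset.mem_range.mp hj; omega
    rw [mul_assoc, qbinom_swap a k j hjk, qbinom_vand j a k, Finset.sum_mul, Finset.mul_sum]
    rw [Finset.eventually_constant_sum ?hsub (Nat.succ_le_succ hjk)]
    case hsub =>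
      intro i hij
      rw [Nat.choose_eq_zero_of_lt hij]
      simp
    refine Finset.sum_congr rfl fun i _ => ?_
    rw [hg]
    ring
  -- RHS
  have hR : ∀ i ∈ Finset.range (k + 1),
      (n.choose i : ℚ) * pP c (k - i) m
      = ∑ j ∈ Finset.Ico i (k + 1), g i j := by
    intro i hi
    have hik : i ≤ k := by have := Finset.mem_range.mp hi; omega
    have e2 : pP c (k - i) m = qbinom a (k - i) * qbinom (a + n + ((k - i : ℕ) : ℚ)) (k - i) := by
      rw [pP, han, ha]
    rw [e2]
    rcases le_or_gt i n with hin | hin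
    · have e3 : a + n + ((k - i : ℕ) : ℚ) = (a + k) + ((n - i : ℕ) : ℚ) := by
        rw [Nat.cast_sub hik, Nat.cast_sub hin]; ring
      rw [e3, qbinom_vand (n - i) (a + k) (k - i), Finset.mul_sum, Finset.mul_sum]
      rw [Finset.sum_Ico_eq_sum_range]
      have hcard : k + 1 - i = (k - i) + 1 := by omega
      rw [hcard]
      refine Finset.sum_congr rfl fun l hl => ?_
      have hlk : l ≤ k - i := by have := Finset.mem_range.mp hl; omega
      have htri : (n.choose i) * ((n - i).choose l) = (n.choose (i + l)) * ((i + l).choose i) := by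
        rcases le_or_gt (i + l) n with h | h
        · have h2 := Nat.choose_mul (n := n) (show i ≤ i + l by omega)
          rw [Nat.add_sub_cancel_left] at h2
          omega
        · rw [Nat.choose_eq_zero_of_lt h, Nat.choose_eq_zero_of_lt (by omega : n - i < l)]
          ring
      have htriQ : ((n.choose i : ℚ)) * ((n - i).choose l : ℚ)
          = (n.choose (i + l) : ℚ) * ((i + l).choose i : ℚ) := by exact_mod_cast htri
      rw [hg]
      simp only
      have hsub : k - i - l = k - (i + l) := by omega
      rw [← hsub]
      linear_combination qbinom a (k - i) * qbinom (a + (k : ℚ)) (k - i - l) * htriQ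
    · -- i > n : both sides vanish
      rw [Nat.choose_eq_zero_of_lt hin, Nat.cast_zero, zero_mul]
      symm
      refine Finset.sum_eq_zero fun j hj => ?_
      have hz : n.choose j = 0 := Nat.choose_eq_zero_of_lt (by
        have := (Finset.mem_Ico.mp hj).1; omega)
      rw [hg]
      simp only
      rw [hz]
      push_cast
      ring
  rw [hL, Finset.sum_congr rfl hR]
  rw [Finset.range_eq_Ico, Finset.sum_Ico_Ico_comm]
  simp only [Finset.range_eq_Ico]
end

section
/- Define p_k^{(c)}(m1, m2) := ∑_{k1+k2=k} p_{k1}^{(c)}(m1) * q_{k2}^{(c)}(m2), where p_j^{(c)}(m) = binom(m-c-1, j)*binom(m+c+j, j) and q_j^{(c)}(m) = binom(m+c, j)*binom(m-c-1+j, j). Then p_k^{(c)}(m1, m2) is symmetric in m1 and m2, i.e., p_k^{(c)}(m1, m2) = p_k^{(c)}(m2, m1), and moreover p_k^{(c)}(m1, m2) = ∑_{k1+k2+i=k} binom(2c+1, i) * p_{k1}^{(c)}(m1) * p_{k2}^{(c)}(m2). -/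
/-- `p_k^{(c)}(m1, m2) = ∑_{k1+k2=k} p_{k1}^{(c)}(m1) q_{k2}^{(c)}(m2)`. -/
noncomputable def pP2 (c k : ℕ) (m1 m2 : ℚ) : ℚ :=
  ∑ kk ∈ Finset.HasAntidiagonal.antidiagonal k, pP c kk.1 m1 * qP c kk.2 m2

lemma qbinom_succ_bot (x : ℚ) (k : ℕ) :
    (k + 1 : ℚ) * qbinom x (k + 1) = (x - k) * qbinom x k := by
  rw [qbinom, qbinom, Finset.prod_range_succ, Nat.factorial_succ]
  push_cast
  have h1 : (Nat.factorial k : ℚ) ≠ 0 := by positivity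
  field_simp

lemma qbinom_succ_top (x : ℚ) (k : ℕ) :
    (k + 1 : ℚ) * qbinom (x + 1) (k + 1) = (x + 1) * qbinom x k := by
  rw [qbinom, qbinom, Nat.factorial_succ]
  have h : ∏ i ∈ Finset.range (k+1), (x + 1 - i) = (x+1) * ∏ i ∈ Finset.range k, (x - i) := by
    rw [Finset.prod_range_succ']
    have h2 : ∀ i ∈ Finset.range k, x + 1 - ((i+1 : ℕ):ℚ) = x - i := by
      intro i _; push_cast; ring
    rw [Finset.prod_congr rfl h2]
    norm_num
    ring
  rw [h]
  push_cast
  have h1 : (Nat.factorial k : ℚ) ≠ 0 := by positivity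
  field_simp

lemma choose_succ_q (a i : ℕ) :
    (i + 1 : ℚ) * (a.choose (i+1) : ℚ) = ((a : ℚ) - i) * a.choose i := by
  rcases le_or_gt (i+1) a with h | h
  · have := Nat.choose_succ_right_eq a i
    calc (i + 1 : ℚ) * (a.choose (i+1) : ℚ) = ((a.choose (i+1) * (i+1) : ℕ) : ℚ) := by push_cast; ring
      _ = ((a.choose i * (a - i) : ℕ) : ℚ) := by rw [this]
      _ = ((a:ℚ) - i) * a.choose i := by push_cast [show i ≤ a by omega]; ring
  · rcases Nat.lt_or_ge a i with h2 | h2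
    · rw [Nat.choose_eq_zero_of_lt (by omega), Nat.choose_eq_zero_of_lt h2]; simp
    · have hai : a = i := by omega
      subst hai
      rw [Nat.choose_eq_zero_of_lt (by omega)]
      simp

lemma termwise (a i l : ℕ) (x : ℚ) :
    (x + a - i - l) * (x + i + l + 1) *
      ((a.choose i : ℚ) * (qbinom x l * qbinom (x + a + l) l))
    = ((l:ℚ)+1)^2 * ((a.choose i : ℚ) * (qbinom x (l+1) * qbinom (x + a + l + 1) (l+1)))
      + ((i:ℚ)+1) * ((i:ℚ) + 2*l + 1) *
        ((a.choose (i+1) : ℚ) * (qbinom x l * qbinom (x + a + l) l)) := by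
  have h1 := qbinom_succ_bot x l
  have h2 := qbinom_succ_top (x + a + l) l
  have h3 := choose_succ_q a i
  have e1 : ((l:ℚ)+1)^2 * (qbinom x (l+1) * qbinom (x + a + l + 1) (l+1))
      = (x - l) * (x + a + l + 1) * (qbinom x l * qbinom (x + a + l) l) := by
    calc ((l:ℚ)+1)^2 * (qbinom x (l+1) * qbinom (x + a + l + 1) (l+1))
        = (((l:ℚ)+1) * qbinom x (l+1)) * (((l:ℚ)+1) * qbinom (x + a + l + 1) (l+1)) := by ring
      _ = ((x - l) * qbinom x l) * ((x + a + l + 1) * qbinom (x + a + l) l) := by rw [h1, h2]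
      _ = (x - l) * (x + a + l + 1) * (qbinom x l * qbinom (x + a + l) l) := by ring
  linear_combination (-(a.choose i : ℚ)) * e1
    - (((i:ℚ) + 2*l + 1) * (qbinom x l * qbinom (x + a + l) l)) * h3

/-- `S a j x = ∑_{i+l=j} C(a,i) qbinom(x,l) qbinom(x+a+l,l)` -/
noncomputable def Ssum (a j : ℕ) (x : ℚ) : ℚ :=
  ∑ p ∈ Finset.HasAntidiagonal.antidiagonal j, (a.choose p.1 : ℚ) * (qbinom x p.2 * qbinom (x + a + p.2) p.2)

lemma Srec (a j : ℕ) (x : ℚ) :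
    ((j:ℚ)+1)^2 * Ssum a (j+1) x = (x + a - j) * (x + j + 1) * Ssum a j x := by
  rw [Ssum, Ssum, Finset.mul_sum, Finset.mul_sum]
  have hR : ∀ p ∈ Finset.HasAntidiagonal.antidiagonal j,
      (x + a - j) * (x + j + 1) * ((a.choose p.1 : ℚ) * (qbinom x p.2 * qbinom (x + a + p.2) p.2))
      = (((p.2:ℚ)+1)^2 * ((a.choose p.1 : ℚ) * (qbinom x (p.2+1) * qbinom (x + a + p.2 + 1) (p.2+1)))
        + ((p.1:ℚ)+1) * ((p.1:ℚ) + 2*p.2 + 1) *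
          ((a.choose (p.1+1) : ℚ) * (qbinom x p.2 * qbinom (x + a + p.2) p.2))) := by
    intro p hp
    have hj : p.1 + p.2 = j := Finset.HasAntidiagonal.mem_antidiagonal.mp hp
    have := termwise a p.1 p.2 x
    rw [show (x + a - j) = (x + a - p.1 - p.2) from by rw [← hj]; push_cast; ring,
        show (x + (j:ℚ) + 1) = (x + p.1 + p.2 + 1) from by rw [← hj]; push_cast; ring]
    exact this
  rw [Finset.sum_congr rfl hR, Finset.sum_add_distrib]
  have hL : ∀ p ∈ Finset.HasAntidiagonal.antidiagonal (j+1),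
      ((j:ℚ)+1)^2 * ((a.choose p.1 : ℚ) * (qbinom x p.2 * qbinom (x + a + p.2) p.2))
      = ((p.2:ℚ))^2 * ((a.choose p.1 : ℚ) * (qbinom x p.2 * qbinom (x + a + p.2) p.2))
        + ((p.1:ℚ)) * ((p.1:ℚ) + 2*p.2) *
          ((a.choose p.1 : ℚ) * (qbinom x p.2 * qbinom (x + a + p.2) p.2)) := by
    intro p hp
    have hj : p.1 + p.2 = j + 1 := Finset.HasAntidiagonal.mem_antidiagonal.mp hp
    have : ((j:ℚ)+1) = (p.1:ℚ) + p.2 := by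
      have h2 : ((p.1+p.2:ℕ):ℚ) = ((j+1:ℕ):ℚ) := by rw [hj]
      push_cast at h2; linarith
    rw [this]; ring
  rw [Finset.sum_congr rfl hL, Finset.sum_add_distrib]
  congr 1
  · rw [Finset.Nat.sum_antidiagonal_succ'
      (f := fun p => ((p.2:ℚ))^2 * ((a.choose p.1 : ℚ) * (qbinom x p.2 * qbinom (x + a + p.2) p.2)))]
    simp only [Nat.cast_zero, Nat.cast_add, Nat.cast_one]
    rw [show ((0:ℚ))^2 * ((a.choose (j+1) : ℚ) * (qbinom x 0 * qbinom (x + a + 0) 0)) = 0 from by ring]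
    rw [zero_add]
    apply Finset.sum_congr rfl
    intro p hp
    push_cast
    ring
  · rw [Finset.Nat.sum_antidiagonal_succ
      (f := fun p => ((p.1:ℚ)) * ((p.1:ℚ) + 2*p.2) * ((a.choose p.1 : ℚ) * (qbinom x p.2 * qbinom (x + a + p.2) p.2)))]
    simp only [Nat.cast_zero, zero_mul, zero_add]
    apply Finset.sum_congr rfl
    intro p hp
    push_cast
    ring

/-- The key identity: `∑_{i+l=j} C(a,i) binom(x,l) binom(x+a+l,l) = binom(x+a,j) binom(x+j,j)`. -/
lemma key (a j : ℕ) (x : ℚ) :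
    Ssum a j x = qbinom (x + a) j * qbinom (x + j) j := by
  induction j with
  | zero =>
      simp [Ssum, qbinom_zero]
  | succ j ih =>
      have hrec := Srec a j x
      rw [ih] at hrec
      have hG : ((j:ℚ)+1)^2 * (qbinom (x + a) (j+1) * qbinom (x + (j+1:ℕ)) (j+1))
          = (x + a - j) * (x + j + 1) * (qbinom (x + a) j * qbinom (x + j) j) := by
        have g1 := qbinom_succ_bot (x + a) j
        have g2 := qbinom_succ_top (x + j) j
        push_cast
        calc ((j:ℚ)+1)^2 * (qbinom (x + a) (j+1) * qbinom (x + ((j:ℚ) + 1)) (j+1))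
            = (((j:ℚ)+1) * qbinom (x + a) (j+1)) * (((j:ℚ)+1) * qbinom (x + j + 1) (j+1)) := by
              rw [show x + ((j:ℚ)+1) = x + (j:ℚ) + 1 from by ring]; ring
          _ = ((x + a - j) * qbinom (x + a) j) * ((x + j + 1) * qbinom (x + j) j) := by rw [g1, g2]
          _ = _ := by ring
      have hne : (((j:ℚ)+1)^2) ≠ 0 := by positivity
      apply mul_left_cancel₀ hne
      rw [hrec, hG]

/-- `q_j^{(c)}(m) = ∑_{i+l=j} C(2c+1,i) p_l^{(c)}(m)`. -/
lemma qP_eq (c j : ℕ) (m : ℚ) :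
    qP c j m = ∑ p ∈ Finset.HasAntidiagonal.antidiagonal j, ((2*c+1).choose p.1 : ℚ) * pP c p.2 m := by
  have h := key (2*c+1) j (m - c - 1)
  rw [Ssum] at h
  have h1 : m - (c:ℚ) - 1 + ((2*c+1 : ℕ):ℚ) = m + c := by push_cast; ring
  have h2 : ∀ p : ℕ × ℕ, m - (c:ℚ) - 1 + ((2*c+1 : ℕ):ℚ) + (p.2:ℚ) = m + c + p.2 := by
    intro p; push_cast; ring
  rw [qP, ← h1]
  rw [show m - (c:ℚ) - 1 + (j:ℚ) = (m - c - 1) + j from by ring]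
  rw [← h]
  apply Finset.sum_congr rfl
  intro p hp
  rw [pP, h2 p]

/-- Reassociation of a triple sum over compositions. -/
lemma reassoc (n : ℕ) (f : ℕ → ℕ → ℕ → ℚ) :
    ∑ p ∈ Finset.HasAntidiagonal.antidiagonal n, ∑ q ∈ Finset.HasAntidiagonal.antidiagonal p.2, f p.1 q.1 q.2
    = ∑ p ∈ Finset.HasAntidiagonal.antidiagonal n, ∑ q ∈ Finset.HasAntidiagonal.antidiagonal p.2, f q.1 p.1 q.2 := by
  rw [Finset.sum_sigma', Finset.sum_sigma']
  refine Finset.sum_nbij'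
    (i := fun r : Σ _p : ℕ × ℕ, ℕ × ℕ => (⟨(r.2.1, r.1.1 + r.2.2), (r.1.1, r.2.2)⟩ : Σ _p : ℕ × ℕ, ℕ × ℕ))
    (j := fun r : Σ _p : ℕ × ℕ, ℕ × ℕ => (⟨(r.2.1, r.1.1 + r.2.2), (r.1.1, r.2.2)⟩ : Σ _p : ℕ × ℕ, ℕ × ℕ))
    ?_ ?_ ?_ ?_ ?_
  · intro r hr
    obtain ⟨⟨a, s⟩, b, d⟩ := r
    simp only [Finset.mem_sigma, Finset.HasAntidiagonal.mem_antidiagonal] at hr ⊢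
    exact ⟨by omega, trivial⟩
  · intro r hr
    obtain ⟨⟨a, s⟩, b, d⟩ := r
    simp only [Finset.mem_sigma, Finset.HasAntidiagonal.mem_antidiagonal, and_true] at hr ⊢
    omega
  · intro r hr
    simp only [Finset.mem_sigma, Finset.HasAntidiagonal.mem_antidiagonal] at hr
    obtain ⟨⟨a, s⟩, b, d⟩ := r
    simp only at hr ⊢
    ext <;> simp <;> omega
  · intro r hr
    simp only [Finset.mem_sigma, Finset.HasAntidiagonal.mem_antidiagonal] at hr
    obtain ⟨⟨a, s⟩, b, d⟩ := r
    simp only at hr ⊢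
    ext <;> simp <;> omega
  · intro r hr
    rfl

theorem stmt4 (c k : ℕ) (m1 m2 : ℚ) :
    pP2 c k m1 m2 = pP2 c k m2 m1 ∧
    pP2 c k m1 m2 =
      ∑ x ∈ Finset.HasAntidiagonal.antidiagonal k, ∑ y ∈ Finset.HasAntidiagonal.antidiagonal x.2,
        (Nat.choose (2 * c + 1) x.1 : ℚ) * pP c y.1 m1 * pP c y.2 m2 := by
  have main : ∀ n1 n2 : ℚ, pP2 c k n1 n2 =
      ∑ x ∈ Finset.HasAntidiagonal.antidiagonal k, ∑ y ∈ Finset.HasAntidiagonal.antidiagonal x.2,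
        (Nat.choose (2 * c + 1) x.1 : ℚ) * pP c y.1 n1 * pP c y.2 n2 := by
    intro n1 n2
    rw [pP2]
    have step1 : ∀ p ∈ Finset.HasAntidiagonal.antidiagonal k,
        pP c p.1 n1 * qP c p.2 n2
        = ∑ q ∈ Finset.HasAntidiagonal.antidiagonal p.2, ((2*c+1).choose q.1 : ℚ) * pP c p.1 n1 * pP c q.2 n2 := by
      intro p _
      rw [qP_eq, Finset.mul_sum]
      apply Finset.sum_congr rfl
      intro q _
      ring
    rw [Finset.sum_congr rfl step1]
    exact reassoc k (fun u v w => ((2*c+1).choose v : ℚ) * pP c u n1 * pP c w n2)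
  constructor
  · rw [main m1 m2, main m2 m1]
    apply Finset.sum_congr rfl
    intro p _
    rw [← Finset.Nat.sum_antidiagonal_swap
      (f := fun q => ((2*c+1).choose p.1 : ℚ) * pP c q.1 m2 * pP c q.2 m1)]
    apply Finset.sum_congr rfl
    intro q _
    simp [Prod.swap]
    ring
  · exact main m1 m2
end

section
/- For b ≥ 1 and n ≥ 1, α_{n-1,n}^{(b)} = ((n+1)/2) * b * (b-1), where α_{k,n}^{(b)} := [u^{n-k}] (u/h_b(u))^{n+1} and h_b(u) = ∑_{j=1}^{b} ((-1)^{j-1}/b) binom(b,j) binom(b,j-1) u^j. -/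
open PowerSeries

/-- The power series `h_b(u)/u = ∑_{i=0}^{b-1} ((-1)^i/b) binom(b,i+1) binom(b,i) u^i`,
where `h_b(u) = ∑_{j=1}^{b} ((-1)^{j-1}/b) binom(b,j) binom(b,j-1) u^j`. For `b ≥ 1` it has
constant term `1`, so that `u/h_b(u) = (hDivU b)⁻¹` is a well-defined formal power series. -/
noncomputable def hDivU (b : ℕ) : PowerSeries ℚ :=
  ∑ i ∈ Finset.range b,
    PowerSeries.C ((-1 : ℚ) ^ i / b * (Nat.choose b (i + 1)) * (Nat.choose b i)) *
      PowerSeries.X ^ i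

/-- Coefficient extraction `[u^d] F` for an integer index `d`, with the convention that
`[u^d] F = 0` for `d < 0`. -/
noncomputable def coeffZ (d : ℤ) (F : PowerSeries ℚ) : ℚ :=
  if 0 ≤ d then PowerSeries.coeff d.toNat F else 0

/-- `α_{k,n}^{(b)} = [u^{n-k}] (u/h_b(u))^{n+1}`. -/
noncomputable def alphaC (b k n : ℕ) : ℚ :=
  coeffZ ((n : ℤ) - (k : ℤ)) ((hDivU b)⁻¹ ^ (n + 1))

lemma hDivU_coeff0 (b : ℕ) (hb : 1 ≤ b) : PowerSeries.coeff 0 (hDivU b) = 1 := by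
  have hb0 : (b:ℚ) ≠ 0 := Nat.cast_ne_zero.mpr (by omega)
  simp only [hDivU, map_sum, PowerSeries.coeff_C_mul, PowerSeries.coeff_X_pow]
  rw [Finset.sum_eq_single 0]
  · simp [hb0, Nat.choose_one_right]
  · intro i _ hi; simp [Ne.symm hi]
  · intro h; simp at h; omega

lemma hDivU_coeff1 (b : ℕ) (hb : 1 ≤ b) :
    PowerSeries.coeff 1 (hDivU b) = -((b:ℚ)*((b:ℚ)-1)/2) := by
  have hb0 : (b:ℚ) ≠ 0 := Nat.cast_ne_zero.mpr (by omega)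
  simp only [hDivU, map_sum, PowerSeries.coeff_C_mul, PowerSeries.coeff_X_pow]
  rw [Finset.sum_eq_single 1]
  · rcases Nat.lt_or_ge 1 b with h | h
    · simp only [if_pos rfl, if_true, mul_one, pow_one]
      rw [Nat.choose_one_right, Nat.cast_choose_two]
      field_simp
    · interval_cases b; simp
  · intro i _ hi; simp [Ne.symm hi]
  · intro h; simp at h
    interval_cases b; simp

lemma inv_coeff0 (b : ℕ) (hb : 1 ≤ b) :
    PowerSeries.coeff 0 (hDivU b)⁻¹ = 1 := by
  rw [PowerSeries.coeff_zero_eq_constantCoeff, PowerSeries.constantCoeff_inv]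
  have := hDivU_coeff0 b hb
  rw [PowerSeries.coeff_zero_eq_constantCoeff] at this
  rw [this]; norm_num

lemma inv_coeff1 (b : ℕ) (hb : 1 ≤ b) :
    PowerSeries.coeff 1 (hDivU b)⁻¹ = (b:ℚ)*((b:ℚ)-1)/2 := by
  have hc : PowerSeries.constantCoeff (hDivU b) ≠ 0 := by
    rw [← PowerSeries.coeff_zero_eq_constantCoeff, hDivU_coeff0 b hb]; norm_num
  have hmul : hDivU b * (hDivU b)⁻¹ = 1 := PowerSeries.mul_inv_cancel _ hc
  have := congrArg (PowerSeries.coeff 1) hmul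
  rw [PowerSeries.coeff_mul, Finset.Nat.sum_antidiagonal_eq_sum_range_succ_mk] at this
  simp [Finset.sum_range_succ, hDivU_coeff0 b hb, hDivU_coeff1 b hb, inv_coeff0 b hb] at this
  linarith

lemma inv_pow_coeffs (b : ℕ) (hb : 1 ≤ b) (m : ℕ) :
    PowerSeries.coeff 0 ((hDivU b)⁻¹ ^ m) = 1 ∧
    PowerSeries.coeff 1 ((hDivU b)⁻¹ ^ m) = m * ((b:ℚ)*((b:ℚ)-1)/2) := by
  induction m with
  | zero => simp
  | succ m ih =>
    obtain ⟨ih0, ih1⟩ := ih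
    constructor
    · rw [pow_succ, PowerSeries.coeff_mul, Finset.Nat.sum_antidiagonal_eq_sum_range_succ_mk]
      simp [ih0, inv_coeff0 b hb]
    · rw [pow_succ, PowerSeries.coeff_mul, Finset.Nat.sum_antidiagonal_eq_sum_range_succ_mk]
      simp [Finset.sum_range_succ, ih0, ih1, inv_coeff0 b hb, inv_coeff1 b hb]
      ring

theorem stmt11 (b n : ℕ) (hb : 1 ≤ b) (hn : 1 ≤ n) :
    alphaC b (n - 1) n = ((n : ℚ) + 1) / 2 * b * ((b : ℚ) - 1) := by
  have hd : (n : ℤ) - ((n - 1 : ℕ) : ℤ) = 1 := by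
    have : ((n - 1 : ℕ) : ℤ) = (n : ℤ) - 1 := by omega
    omega
  rw [alphaC, hd, coeffZ, if_pos (by norm_num)]
  have := (inv_pow_coeffs b hb (n + 1)).2
  norm_num at this ⊢
  rw [this]
  ring
end

section
/- For b ≥ 1 and n ≥ 2, α_{n-2,n}^{(b)} = ((n+1)/6) * (((3n+4)/4) * b + 1) * b * (b-1)^2, where α_{k,n}^{(b)} := [u^{n-k}] (u/h_b(u))^{n+1} and h_b(u) = ∑_{j=1}^{b} ((-1)^{j-1}/b) binom(b,j) binom(b,j-1) u^j. -/
open PowerSeries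

lemma coeff_hDivU (b k : ℕ) :
    PowerSeries.coeff k (hDivU b) =
      (-1 : ℚ) ^ k / b * (Nat.choose b (k + 1)) * (Nat.choose b k) := by
  unfold hDivU
  rw [map_sum]
  simp only [PowerSeries.coeff_C_mul, PowerSeries.coeff_X_pow, mul_ite, mul_one, mul_zero]
  rw [Finset.sum_ite_eq (Finset.range b) k]
  by_cases hk : k < b
  · simp [hk]
  · have h1 : Nat.choose b (k + 1) = 0 := Nat.choose_eq_zero_of_lt (by omega)
    simp [hk, h1]

lemma cast_choose_three (b : ℕ) :
    ((Nat.choose b 3 : ℕ) : ℚ) = b * ((b : ℚ) - 1) * ((b : ℚ) - 2) / 6 := by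
  induction b with
  | zero => norm_num
  | succ m ih =>
    rw [Nat.choose_succ_succ]
    push_cast
    rw [ih, Nat.cast_choose_two]
    ring

lemma constCoeff_hDivU (b : ℕ) (hb : 1 ≤ b) :
    PowerSeries.constantCoeff (hDivU b) = 1 := by
  have := coeff_hDivU b 0
  rw [PowerSeries.coeff_zero_eq_constantCoeff] at this
  rw [this]
  have hb' : (b : ℚ) ≠ 0 := by positivity
  simp [Nat.choose_one_right, hb']

lemma coeff_one_pow (F : PowerSeries ℚ) (h0 : PowerSeries.constantCoeff F = 1) (N : ℕ) :
    PowerSeries.coeff 1 (F ^ N) = N * PowerSeries.coeff 1 F := by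
  induction N with
  | zero => simp
  | succ m ih =>
    rw [pow_succ, PowerSeries.coeff_mul]
    rw [Finset.Nat.sum_antidiagonal_eq_sum_range_succ_mk]
    simp [Finset.sum_range_succ, ih, PowerSeries.coeff_zero_eq_constantCoeff, h0, map_pow]
    ring

lemma coeff_two_pow (F : PowerSeries ℚ) (h0 : PowerSeries.constantCoeff F = 1) (N : ℕ) :
    PowerSeries.coeff 2 (F ^ N) =
      N * PowerSeries.coeff 2 F +
        N * ((N : ℚ) - 1) / 2 * (PowerSeries.coeff 1 F) ^ 2 := by
  induction N with
  | zero => simp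
  | succ m ih =>
    rw [pow_succ, PowerSeries.coeff_mul]
    rw [Finset.Nat.sum_antidiagonal_eq_sum_range_succ_mk]
    simp only [Finset.sum_range_succ, Finset.sum_range_zero]
    rw [ih, coeff_one_pow F h0]
    simp [PowerSeries.coeff_zero_eq_constantCoeff, h0, map_pow]
    ring

theorem stmt12 (b n : ℕ) (hb : 1 ≤ b) (hn : 2 ≤ n) :
    alphaC b (n - 2) n =
      ((n : ℚ) + 1) / 6 * ((3 * (n : ℚ) + 4) / 4 * b + 1) * b * ((b : ℚ) - 1) ^ 2 := by
  have hb' : (b : ℚ) ≠ 0 := by positivity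
  have hc0 := constCoeff_hDivU b hb
  set F := (hDivU b)⁻¹ with hF
  have hF0 : PowerSeries.constantCoeff F = 1 := by
    rw [hF, PowerSeries.constantCoeff_inv, hc0]; norm_num
  have hmul : hDivU b * F = 1 := PowerSeries.mul_inv_cancel _ (by rw [hc0]; norm_num)
  -- coefficients of hDivU
  have h1 : PowerSeries.coeff 1 (hDivU b) = -(b * ((b : ℚ) - 1) / 2) := by
    rw [coeff_hDivU, Nat.cast_choose_two, Nat.choose_one_right]
    field_simp
  have h2 : PowerSeries.coeff 2 (hDivU b) = b * ((b : ℚ) - 1) ^ 2 * ((b : ℚ) - 2) / 12 := by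
    rw [coeff_hDivU, Nat.cast_choose_two]
    norm_num [cast_choose_three]
    field_simp
    ring
  -- coefficients of F from hDivU * F = 1
  have e1 : PowerSeries.coeff 1 (hDivU b * F) = 0 := by rw [hmul]; simp
  have e2 : PowerSeries.coeff 2 (hDivU b * F) = 0 := by rw [hmul]; simp
  rw [PowerSeries.coeff_mul, Finset.Nat.sum_antidiagonal_eq_sum_range_succ_mk] at e1 e2
  norm_num [Finset.sum_range_succ, PowerSeries.coeff_zero_eq_constantCoeff, hc0, hF0] at e1 e2
  have hf1 : PowerSeries.coeff 1 F = b * ((b : ℚ) - 1) / 2 := by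
    have := e1; rw [h1] at this; linarith
  have hf2 : PowerSeries.coeff 2 F =
      (b * ((b : ℚ) - 1) / 2) ^ 2 - b * ((b : ℚ) - 1) ^ 2 * ((b : ℚ) - 2) / 12 := by
    rw [h1, h2, hf1] at e2; nlinarith [e2]
  -- reduce alphaC to coeff 2
  have hd : (n : ℤ) - ((n - 2 : ℕ) : ℤ) = 2 := by omega
  rw [alphaC, hd]
  simp only [coeffZ, if_pos (by norm_num : (0:ℤ) ≤ 2), Int.toNat_natCast]
  rw [show Int.toNat 2 = 2 from rfl, coeff_two_pow F hF0, hf1, hf2]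
  push_cast
  ring
end

section
/- For each fixed pair of nonnegative integers k ≤ n, the map b ↦ α_{k,n}^{(b)} := [u^{n-k}] (u/h_b(u))^{n+1} (for integer b ≥ 1) agrees with a polynomial in b of degree at most 2(n-k). -/
open PowerSeries

/-- Universal coefficient polynomial. -/
noncomputable def uA (i : ℕ) : Polynomial ℚ :=
  Polynomial.C ((-1 : ℚ) ^ i / ((Nat.factorial (i + 1)) * (Nat.factorial i))) *
    ((descPochhammer ℚ i).comp (Polynomial.X - 1)) * descPochhammer ℚ i

lemma uA_natDegree (i : ℕ) : (uA i).natDegree ≤ 2 * i := by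
  unfold uA
  refine le_trans (Polynomial.natDegree_mul_le) ?_
  have h1 : (((descPochhammer ℚ i).comp (Polynomial.X - 1))).natDegree ≤ i := by
    refine le_trans (Polynomial.natDegree_comp_le) ?_
    have hx : (Polynomial.X - 1 : Polynomial ℚ).natDegree = 1 := by
      simpa using Polynomial.natDegree_X_sub_C (1 : ℚ)
    rw [hx, mul_one, descPochhammer_natDegree]
  have h2 : (descPochhammer ℚ i).natDegree = i := descPochhammer_natDegree ℚ i
  have h3 : (Polynomial.C ((-1 : ℚ) ^ i / ((Nat.factorial (i + 1)) * (Nat.factorial i))) *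
      ((descPochhammer ℚ i).comp (Polynomial.X - 1))).natDegree ≤ i := by
    refine le_trans (Polynomial.natDegree_mul_le) ?_
    simpa using h1
  omega

lemma uA_eval (i : ℕ) (b : ℕ) (hb : 1 ≤ b) :
    (uA i).eval (b : ℚ) = (-1 : ℚ) ^ i / b * (Nat.choose b (i + 1)) * (Nat.choose b i) := by
  obtain ⟨c, rfl⟩ : ∃ c, b = c + 1 := ⟨b - 1, by omega⟩
  set b := c + 1 with hbdef
  have hb1 : ((b - 1 : ℕ) : ℚ) = (b : ℚ) - 1 := by
    simp [hbdef]
  have hcomp : ((descPochhammer ℚ i).comp (Polynomial.X - 1)).eval (b : ℚ)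
      = ((b - 1 : ℕ).descFactorial i : ℚ) := by
    rw [Polynomial.eval_comp]
    simp only [Polynomial.eval_sub, Polynomial.eval_X, Polynomial.eval_one]
    rw [← hb1, descPochhammer_eval_eq_descFactorial]
  have hd : (descPochhammer ℚ i).eval (b : ℚ) = (b.descFactorial i : ℚ) :=
    descPochhammer_eval_eq_descFactorial ℚ b i
  have hsucc : b.descFactorial (i + 1) = b * (b - 1).descFactorial i := by
    rw [hbdef]; simpa using Nat.succ_descFactorial_succ c i
  have hb0 : (b : ℚ) ≠ 0 := by positivity
  unfold uA
  rw [Polynomial.eval_mul, Polynomial.eval_mul, Polynomial.eval_C, hcomp, hd]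
  have h1 : ((b - 1 : ℕ).descFactorial i : ℚ) = (b.descFactorial (i+1) : ℚ) / b := by
    rw [hsucc]; push_cast; field_simp
  rw [h1, Nat.descFactorial_eq_factorial_mul_choose, Nat.descFactorial_eq_factorial_mul_choose]
  have hf1 : ((Nat.factorial (i+1)) : ℚ) ≠ 0 := by positivity
  have hf2 : ((Nat.factorial i) : ℚ) ≠ 0 := by positivity
  push_cast
  field_simp

lemma hDivU_coeff (b i : ℕ) :
    PowerSeries.coeff i (hDivU b) =
      if i ∈ Finset.range b then
        (-1 : ℚ) ^ i / b * (Nat.choose b (i + 1)) * (Nat.choose b i) else 0 := by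
  rw [hDivU, map_sum]
  have h : ∀ x ∈ Finset.range b,
      (PowerSeries.coeff i) (PowerSeries.C
        ((-1 : ℚ) ^ x / b * (Nat.choose b (x + 1)) * (Nat.choose b x)) * PowerSeries.X ^ x) =
      if x = i then (-1 : ℚ) ^ x / b * (Nat.choose b (x + 1)) * (Nat.choose b x) else 0 := by
    intro x _
    rw [PowerSeries.coeff_C_mul, PowerSeries.coeff_X_pow]
    by_cases hx : x = i
    · subst hx; simp
    · rw [if_neg hx, if_neg (fun h => hx h.symm)]; simp
  rw [Finset.sum_congr rfl h, Finset.sum_ite_eq' (Finset.range b) i]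

/-- The universal power series with polynomial coefficients. -/
noncomputable def uH : PowerSeries (Polynomial ℚ) := PowerSeries.mk uA

lemma uH_map (b : ℕ) (hb : 1 ≤ b) :
    PowerSeries.map (Polynomial.evalRingHom (b : ℚ)) uH = hDivU b := by
  ext i
  rw [PowerSeries.coeff_map]
  simp only [uH, PowerSeries.coeff_mk, Polynomial.coe_evalRingHom]
  rw [uA_eval i b hb, hDivU_coeff]
  by_cases h : i ∈ Finset.range b
  · rw [if_pos h]
  · rw [if_neg h]
    simp only [Finset.mem_range, not_lt] at h
    have : Nat.choose b (i+1) = 0 := Nat.choose_eq_zero_of_lt (by omega)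
    simp [this]

lemma uH_const : PowerSeries.constantCoeff uH = 1 := by
  simp [uH, ← PowerSeries.coeff_zero_eq_constantCoeff, uA, descPochhammer_zero]

/-- the universal inverse -/
noncomputable def uI : PowerSeries (Polynomial ℚ) := PowerSeries.invOfUnit uH 1

lemma uH_mul_uI : uH * uI = 1 :=
  PowerSeries.mul_invOfUnit uH 1 (by simp [uH_const])

lemma uI_deg : ∀ m : ℕ, (PowerSeries.coeff m uI).natDegree ≤ 2 * m := by
  intro m
  induction m using Nat.strong_induction_on with
  | _ m ih =>
    rw [uI, PowerSeries.coeff_invOfUnit]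
    by_cases hm : m = 0
    · simp [hm]
    · rw [if_neg hm]
      refine le_trans (Polynomial.natDegree_mul_le) ?_
      have hneg : ((-(1 : (Polynomial ℚ)ˣ)⁻¹ : Polynomial ℚ)).natDegree = 0 := by simp
      rw [hneg, zero_add]
      refine le_trans (Polynomial.natDegree_sum_le _ _) ?_
      rw [Finset.fold_max_le]
      refine ⟨by omega, ?_⟩
      rintro ⟨a, c⟩ hac
      replace hac : a + c = m := Finset.HasAntidiagonal.mem_antidiagonal.mp hac
      simp only [Function.comp_apply]
      by_cases hc : c < m
      · rw [if_pos hc]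
        refine le_trans (Polynomial.natDegree_mul_le) ?_
        have h1 : (PowerSeries.coeff a uH).natDegree ≤ 2 * a := by
          simpa [uH] using uA_natDegree a
        have h2 := ih c hc
        rw [uI] at h2
        omega
      · rw [if_neg hc]
        simp

lemma mul_deg {F G : PowerSeries (Polynomial ℚ)}
    (hF : ∀ m, (PowerSeries.coeff m F).natDegree ≤ 2 * m)
    (hG : ∀ m, (PowerSeries.coeff m G).natDegree ≤ 2 * m) :
    ∀ m, (PowerSeries.coeff m (F * G)).natDegree ≤ 2 * m := by
  intro m
  rw [PowerSeries.coeff_mul]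
  refine le_trans (Polynomial.natDegree_sum_le _ _) ?_
  rw [Finset.fold_max_le]
  refine ⟨by omega, ?_⟩
  rintro ⟨a, c⟩ hac
  replace hac : a + c = m := Finset.HasAntidiagonal.mem_antidiagonal.mp hac
  simp only [Function.comp_apply]
  refine le_trans (Polynomial.natDegree_mul_le) ?_
  have := hF a
  have := hG c
  omega

lemma pow_deg (n : ℕ) : ∀ m, (PowerSeries.coeff m (uI ^ n)).natDegree ≤ 2 * m := by
  induction n with
  | zero =>
    intro m
    rw [pow_zero]
    by_cases hm : m = 0
    · simp [hm]
    · rw [PowerSeries.coeff_one, if_neg hm]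
      simp
  | succ n ih =>
    rw [pow_succ]
    exact mul_deg ih uI_deg

theorem stmt13 (k n : ℕ) (hkn : k ≤ n) :
    ∃ P : Polynomial ℚ, P.natDegree ≤ 2 * (n - k) ∧
      ∀ b : ℕ, 1 ≤ b → Polynomial.eval (b : ℚ) P = alphaC b k n := by
  refine ⟨PowerSeries.coeff (n - k) (uI ^ (n + 1)), pow_deg (n + 1) (n - k), ?_⟩
  intro b hb
  have hmap : PowerSeries.map (Polynomial.evalRingHom (b : ℚ)) uI = (hDivU b)⁻¹ := by
    have hconst : PowerSeries.constantCoeff (hDivU b) ≠ 0 := by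
      rw [← uH_map b hb]
      rw [← PowerSeries.coeff_zero_eq_constantCoeff_apply, PowerSeries.coeff_map]
      have h0 := uH_const
      rw [← PowerSeries.coeff_zero_eq_constantCoeff_apply] at h0
      rw [h0]
      simp
    rw [PowerSeries.eq_inv_iff_mul_eq_one hconst]
    rw [mul_comm, ← uH_map b hb, ← map_mul, uH_mul_uI, map_one]
  have : Polynomial.eval (b : ℚ) (PowerSeries.coeff (n - k) (uI ^ (n + 1)))
      = PowerSeries.coeff (n - k) ((hDivU b)⁻¹ ^ (n + 1)) := by
    rw [← hmap, ← map_pow, PowerSeries.coeff_map]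
    rfl
  have ht : ((n : ℤ) - (k : ℤ)).toNat = n - k := by omega
  rw [this, alphaC, coeffZ, if_pos (by omega : (0:ℤ) ≤ (n : ℤ) - (k : ℤ)), ht]
end
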